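/- Restricted empirical measure approximation: under the same setup, assume additionally α₀ ≠ 0 and ε < α₀/2, and R > max{R_{Z̄}(ε), R_{μ₀}(ε)}. For any trajectory w of length n starting at 0 with ‖ℓ(w) − μ‖ < 2^{−R}ε, the normalized restriction of the empirical measure to the central region, ℓ⁰(w) = (1/N⁰(w)) ∑_{j : w_j ∈ A⁰} δ_{w_j}, satisfies ‖ℓ⁰(w) − μ₀‖ < 6ε/α₀. -/

import Mathlib

open MeasureTheory

/-- The two-point compactification `Z̄ = ℤ ∪ {−∞, +∞}` of `ℤ`:
`Sum.inl n` is the integer `n`, `Sum.inr false` is `−∞`, `Sum.inr true` is `+∞`. -/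
abbrev Zbar : Type := ℤ ⊕ Bool

/-- The map `φ : Z̄ → [-1,1]`, `φ(k) = sign(k)(1 − 2^{−|k|})`, `φ(±∞) = ±1`. -/
noncomputable def phi : Zbar → ℝ
  | Sum.inr false => -1
  | Sum.inr true => 1
  | Sum.inl n => if 0 ≤ n then 1 - (2 : ℝ) ^ (-n) else -1 + (2 : ℝ) ^ n

/-- Kantorovich–Rubinstein distance between the empirical measure of a trajectory `w`
and the measure `μ = α₋ δ_{−∞} + α₀ μ₀ + α₊ δ_{+∞} ∈ P(Z̄)`. -/
noncomputable def krDistEmp (n : ℕ) (w : ℕ → ℤ)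
    (am a0 ap : ℝ) (μ₀ : Measure ℤ) : ℝ :=
  sSup {r : ℝ | ∃ f : Zbar → ℝ,
    (∀ a b : Zbar, |f a - f b| ≤ |phi a - phi b|) ∧ (∀ a, |f a| ≤ 1) ∧
    r = (1 / (n : ℝ)) * ∑ j ∈ Finset.Icc 1 n, f (Sum.inl (w j))
          - (am * f (Sum.inr false) + a0 * ∫ z, f (Sum.inl z) ∂μ₀
              + ap * f (Sum.inr true))}

/-- `R_{μ₀}(ε) = min {R ∈ ℕ : μ₀(⟦−R+1, R−1⟧) > 1 − ε}`. -/
noncomputable def Rmu (μ₀ : Measure ℤ) (ε : ℝ) : ℕ :=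
  sInf {R : ℕ | ENNReal.ofReal (1 - ε) < μ₀ {z : ℤ | -(R : ℤ) + 1 ≤ z ∧ z ≤ (R : ℤ) - 1}}

/-- `R_{Z̄}(ε) = ⌈log₂(1/ε)⌉ + 1`. -/
noncomputable def RZbar (ε : ℝ) : ℕ := ⌈Real.logb 2 (1 / ε)⌉₊ + 1

/- ### Auxiliary lemmas -/

lemma phi_inl (z : ℤ) :
    phi (Sum.inl z) = if 0 ≤ z then 1 - (2 : ℝ) ^ (-z) else -1 + (2 : ℝ) ^ z := rfl
lemma phi_bot : phi (Sum.inr false) = -1 := rfl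
lemma phi_top : phi (Sum.inr true) = 1 := rfl

lemma zbar_int_bound (μ₀ : Measure ℤ) [IsProbabilityMeasure μ₀] (g : ℤ → ℝ)
    (hg : ∀ z, |g z| ≤ 1) : Integrable g μ₀ ∧ |∫ z, g z ∂μ₀| ≤ 1 := by
  have hint : Integrable g μ₀ := by
    apply Integrable.mono' (integrable_const 1) (measurable_of_countable g).aestronglyMeasurable
    exact Filter.Eventually.of_forall (fun z => by simpa using hg z)
  refine ⟨hint, ?_⟩
  have := norm_integral_le_of_norm_le (μ := μ₀) (f := g) (integrable_const (1:ℝ))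
    (Filter.Eventually.of_forall (fun z => by simpa using hg z))
  simpa using this

noncomputable def tfun (R : ℕ) (cm c0 cp : ℝ) : Zbar → ℝ
  | Sum.inr false => (2:ℝ)^(-(R:ℤ)) * cm
  | Sum.inr true => (2:ℝ)^(-(R:ℤ)) * cp
  | Sum.inl z => (2:ℝ)^(-(R:ℤ)) * (if z ≤ -(R:ℤ) then cm else if z ≤ (R:ℤ)-1 then c0 else cp)

lemma tfun_inl (R : ℕ) (cm c0 cp : ℝ) (z : ℤ) :
    tfun R cm c0 cp (Sum.inl z)
      = (2:ℝ)^(-(R:ℤ)) * (if z ≤ -(R:ℤ) then cm else if z ≤ (R:ℤ)-1 then c0 else cp) := rfl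

lemma tfun_region (R : ℕ) (hR : 2 ≤ R) (cm c0 cp : ℝ) (a : Zbar) :
    (tfun R cm c0 cp a = (2:ℝ)^(-(R:ℤ)) * cm ∧ -1 ≤ phi a ∧ phi a ≤ -1 + (2:ℝ)^(-(R:ℤ)))
  ∨ (tfun R cm c0 cp a = (2:ℝ)^(-(R:ℤ)) * c0 ∧
      -1 + 2*(2:ℝ)^(-(R:ℤ)) ≤ phi a ∧ phi a ≤ 1 - 2*(2:ℝ)^(-(R:ℤ)))
  ∨ (tfun R cm c0 cp a = (2:ℝ)^(-(R:ℤ)) * cp ∧ 1 - (2:ℝ)^(-(R:ℤ)) ≤ phi a ∧ phi a ≤ 1) := by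
  have hP : (0:ℝ) < (2:ℝ)^(-(R:ℤ)) := by positivity
  have hP4 : (2:ℝ)^(-(R:ℤ)) ≤ 1/4 := by
    have h := zpow_le_zpow_right₀ (a := (2:ℝ)) one_le_two (show -(R:ℤ) ≤ -2 by omega)
    have : ((2:ℝ))^(-2:ℤ) = 1/4 := by norm_num
    linarith [this ▸ h]
  have h2P : (2:ℝ)^(1-(R:ℤ)) = 2*(2:ℝ)^(-(R:ℤ)) := by
    rw [sub_eq_add_neg, zpow_add₀ (two_ne_zero)]; norm_num
  rcases a with z | b
  · by_cases hz : z ≤ -(R:ℤ)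
    · left
      have h0 : ¬ (0 ≤ z) := by omega
      have h1 : (2:ℝ)^z ≤ (2:ℝ)^(-(R:ℤ)) := zpow_le_zpow_right₀ one_le_two hz
      have h2 : (0:ℝ) < (2:ℝ)^z := by positivity
      rw [tfun_inl, if_pos hz, phi_inl, if_neg h0]
      exact ⟨rfl, by linarith, by linarith⟩
    · by_cases hz2 : z ≤ (R:ℤ)-1
      · right; left
        rw [tfun_inl, if_neg hz, if_pos hz2, phi_inl]
        refine ⟨rfl, ?_⟩
        by_cases h0 : 0 ≤ z
        · have h1 : (2:ℝ)^(-z) ≤ (2:ℝ)^(0:ℤ) := zpow_le_zpow_right₀ one_le_two (by omega)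
          have h2 : (2:ℝ)^(1-(R:ℤ)) ≤ (2:ℝ)^(-z) := zpow_le_zpow_right₀ one_le_two (by omega)
          rw [h2P] at h2
          rw [zpow_zero] at h1
          rw [if_pos h0]
          exact ⟨by linarith, by linarith⟩
        · have h1 : (2:ℝ)^z ≤ (2:ℝ)^(-1:ℤ) := zpow_le_zpow_right₀ one_le_two (by omega)
          have h2 : (2:ℝ)^(1-(R:ℤ)) ≤ (2:ℝ)^z := zpow_le_zpow_right₀ one_le_two (by omega)
          rw [h2P] at h2
          have hh : ((2:ℝ))^(-1:ℤ) = 1/2 := by norm_num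
          rw [hh] at h1
          rw [if_neg h0]
          exact ⟨by linarith, by linarith⟩
      · right; right
        have h0 : (0:ℤ) ≤ z := by omega
        have h1 : (2:ℝ)^(-z) ≤ (2:ℝ)^(-(R:ℤ)) := zpow_le_zpow_right₀ one_le_two (by omega)
        have h2 : (0:ℝ) < (2:ℝ)^(-z) := by positivity
        rw [tfun_inl, if_neg hz, if_neg hz2, phi_inl, if_pos h0]
        exact ⟨rfl, by linarith, by linarith⟩
  · rcases b with _ | _
    · left; rw [phi_bot]; exact ⟨rfl, le_refl _, by linarith⟩
    · right; right; rw [phi_top]; exact ⟨rfl, by linarith, le_refl _⟩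

lemma tfun_lip (R : ℕ) (hR : 2 ≤ R) (cm c0 cp : ℝ)
    (h1 : |cm| ≤ 1) (h2 : |c0| ≤ 1) (h3 : |cp| ≤ 1)
    (h4 : |cm - c0| ≤ 1) (h5 : |c0 - cp| ≤ 1) :
    ∀ a b : Zbar, |tfun R cm c0 cp a - tfun R cm c0 cp b| ≤ |phi a - phi b| := by
  intro a b
  have hP : (0:ℝ) < (2:ℝ)^(-(R:ℤ)) := by positivity
  have hP4 : (2:ℝ)^(-(R:ℤ)) ≤ 1/4 := by
    have h := zpow_le_zpow_right₀ (a := (2:ℝ)) one_le_two (show -(R:ℤ) ≤ -2 by omega)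
    have he : ((2:ℝ))^(-2:ℤ) = 1/4 := by norm_num
    linarith [he ▸ h]
  set P := (2:ℝ)^(-(R:ℤ)) with hPdef
  have habs : ∀ c d : ℝ, |c - d| ≤ 2 → |P*c - P*d| ≤ P * 2 := by
    intro c d hcd
    rw [← mul_sub, abs_mul, abs_of_pos hP]
    exact mul_le_mul_of_nonneg_left hcd hP.le
  have habs1 : ∀ c d : ℝ, |c - d| ≤ 1 → |P*c - P*d| ≤ P := by
    intro c d hcd
    rw [← mul_sub, abs_mul, abs_of_pos hP]
    nlinarith
  have hcmp : |cm - cp| ≤ 2 := by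
    have ha := abs_le.mp h1; have hb := abs_le.mp h3
    rw [abs_le]; constructor <;> linarith
  have hab1 : ∀ x y : ℝ, y - x ≤ |x - y| := fun x y => by rw [abs_sub_comm]; exact le_abs_self _
  have hab2 : ∀ x y : ℝ, x - y ≤ |x - y| := fun x y => le_abs_self _
  rcases tfun_region R hR cm c0 cp a with ⟨ea, la, ua⟩ | ⟨ea, la, ua⟩ | ⟨ea, la, ua⟩ <;>
    rcases tfun_region R hR cm c0 cp b with ⟨eb, lb, ub⟩ | ⟨eb, lb, ub⟩ | ⟨eb, lb, ub⟩ <;>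
    rw [ea, eb]
  · simp [abs_nonneg]
  · exact le_trans (habs1 cm c0 h4) (by linarith [hab1 (phi a) (phi b)])
  · exact le_trans (habs cm cp hcmp) (by linarith [hab1 (phi a) (phi b)])
  · exact le_trans (habs1 c0 cm (abs_sub_comm cm c0 ▸ h4)) (by linarith [hab2 (phi a) (phi b)])
  · simp [abs_nonneg]
  · exact le_trans (habs1 c0 cp h5) (by linarith [hab1 (phi a) (phi b)])
  · exact le_trans (habs cp cm (abs_sub_comm cm cp ▸ hcmp)) (by linarith [hab2 (phi a) (phi b)])
  · exact le_trans (habs1 cp c0 (abs_sub_comm c0 cp ▸ h5)) (by linarith [hab2 (phi a) (phi b)])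
  · simp [abs_nonneg]

set_option maxHeartbeats 4000000 in
/-- The restricted empirical measure `ℓ⁰(w)`, normalized on the central region
`A⁰ = ⟦−R+1, R−1⟧`, is `6ε/α₀`-close to `μ₀` in Kantorovich–Rubinstein distance. -/
theorem restricted_empirical_measure_close
    (am a0 ap : ℝ) (ham : 0 ≤ am) (ha0 : 0 ≤ a0) (hap : 0 ≤ ap)
    (hsum : am + a0 + ap = 1) (ha0' : a0 ≠ 0)
    (μ₀ : Measure ℤ) [IsProbabilityMeasure μ₀] (ε : ℝ) (hε : 0 < ε)
    (hεa0 : ε < a0 / 2)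
    (R : ℕ) (hR : max (RZbar ε) (Rmu μ₀ ε) < R)
    (n : ℕ) (hn : 1 ≤ n) (w : ℕ → ℤ) (hw0 : w 1 = 0)
    (hstep : ∀ j, 1 ≤ j → j < n → (w (j + 1) - w j = 1 ∨ w (j + 1) - w j = -1))
    (hclose : krDistEmp n w am a0 ap μ₀ < (2 : ℝ) ^ (-(R : ℤ)) * ε) :
    sSup {r : ℝ | ∃ f : Zbar → ℝ,
        (∀ a b : Zbar, |f a - f b| ≤ |phi a - phi b|) ∧ (∀ a, |f a| ≤ 1) ∧
        r = (1 / ((((Finset.Icc 1 n).filter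
              (fun j => -(R : ℤ) + 1 ≤ w j ∧ w j ≤ (R : ℤ) - 1)).card : ℝ))) *
              ∑ j ∈ (Finset.Icc 1 n).filter
                  (fun j => -(R : ℤ) + 1 ≤ w j ∧ w j ≤ (R : ℤ) - 1),
                f (Sum.inl (w j))
            - ∫ z, f (Sum.inl z) ∂μ₀}
      < 6 * ε / a0 := by
  classical
  have ha0pos : 0 < a0 := lt_of_le_of_ne ha0 (Ne.symm ha0')
  have ha0le1 : a0 ≤ 1 := by linarith
  have hεh : ε < 1/2 := by linarith
  have hR2 : 2 ≤ R := by
    have h1 : RZbar ε < R := lt_of_le_of_lt (le_max_left _ _) hR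
    have h2 : 1 ≤ RZbar ε := Nat.le_add_left 1 _
    omega
  have hnR : (0:ℝ) < (n:ℝ) := by exact_mod_cast Nat.lt_of_lt_of_le Nat.zero_lt_one hn
  set P := (2:ℝ)^(-(R:ℤ)) with hPdef
  have hP : 0 < P := by positivity
  have hP4 : P ≤ 1/4 := by
    have h := zpow_le_zpow_right₀ (a := (2:ℝ)) one_le_two (show -(R:ℤ) ≤ -2 by omega)
    have he : ((2:ℝ))^(-2:ℤ) = 1/4 := by norm_num
    rw [hPdef]; linarith [he ▸ h]
  have hPe : P ≤ ε / 4 := by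
    set k := ⌈Real.logb 2 (1/ε)⌉₊ with hk
    have hkR : (k:ℤ) + 2 ≤ (R:ℤ) := by
      have h1 : RZbar ε < R := lt_of_le_of_lt (le_max_left _ _) hR
      have h2 : k + 1 < R := h1
      push_cast; omega
    have h1 : 1/ε ≤ (2:ℝ)^(k:ℕ) := by
      calc 1/ε = (2:ℝ) ^ Real.logb 2 (1/ε) :=
            (Real.rpow_logb (by norm_num) (by norm_num) (by positivity)).symm
      _ ≤ (2:ℝ) ^ ((k:ℕ):ℝ) := Real.rpow_le_rpow_of_exponent_le one_le_two (Nat.le_ceil _)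
      _ = (2:ℝ)^(k:ℕ) := Real.rpow_natCast 2 k
    have h2 : P ≤ (2:ℝ)^(-(k:ℤ)-2) := zpow_le_zpow_right₀ one_le_two (by omega)
    have h3 : (2:ℝ)^(-(k:ℤ)-2) = 1/((2:ℝ)^(k:ℕ) * 4) := by
      rw [show -(k:ℤ)-2 = -((k:ℤ)+2) by ring, zpow_neg, zpow_add₀ (two_ne_zero), zpow_natCast]
      norm_num
    have h4 : (0:ℝ) < (2:ℝ)^(k:ℕ) := by positivity
    have h6 : 1 ≤ 2^(k:ℕ) * ε := (div_le_iff₀ hε).mp h1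
    have h5 : 1/((2:ℝ)^(k:ℕ) * 4) ≤ ε/4 := by
      rw [div_le_div_iff₀ (by positivity) (by norm_num)]
      linarith only [h6]
    rw [h3] at h2
    linarith
  -- measure-side quantities
  set Sm : Set ℤ := {z : ℤ | z ≤ -(R:ℤ)} with hSm
  set S0 : Set ℤ := {z : ℤ | -(R:ℤ)+1 ≤ z ∧ z ≤ (R:ℤ)-1} with hS0
  set Sp : Set ℤ := {z : ℤ | (R:ℤ) ≤ z} with hSp
  set pm := (μ₀ Sm).toReal with hpm
  set p0 := (μ₀ S0).toReal with hp0d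
  set pp := (μ₀ Sp).toReal with hppd
  have hpm0 : 0 ≤ pm := ENNReal.toReal_nonneg
  have hpp0 : 0 ≤ pp := ENNReal.toReal_nonneg
  have hp0le : p0 ≤ 1 := by
    have h1 : μ₀ S0 ≤ μ₀ Set.univ := measure_mono (Set.subset_univ _)
    have h2 := ENNReal.toReal_mono (by simp) h1
    simpa using h2
  have hindint : ∀ (s : Set ℤ) (c : ℝ), |c| ≤ 1 → Integrable (s.indicator (fun _ => c)) μ₀ := by
    intro s c hc
    refine (zbar_int_bound μ₀ _ (fun z => ?_)).1
    by_cases hz : z ∈ s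
    · simpa [Set.indicator_apply, hz] using hc
    · simp [Set.indicator_apply, hz]
  have hintdecomp : ∀ cm c0 cp : ℝ, |cm| ≤ 1 → |c0| ≤ 1 → |cp| ≤ 1 →
      ∫ z, (Sm.indicator (fun _ => cm) z + S0.indicator (fun _ => c0) z
        + Sp.indicator (fun _ => cp) z) ∂μ₀ = cm * pm + c0 * p0 + cp * pp := by
    intro cm c0 cp h1 h2 h3
    have i1 : Integrable (fun z => Sm.indicator (fun _ => cm) z) μ₀ := hindint Sm cm h1
    have i2 : Integrable (fun z => S0.indicator (fun _ => c0) z) μ₀ := hindint S0 c0 h2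
    have i3 : Integrable (fun z => Sp.indicator (fun _ => cp) z) μ₀ := hindint Sp cp h3
    have i12 : Integrable (fun z => Sm.indicator (fun _ => cm) z
        + S0.indicator (fun _ => c0) z) μ₀ := i1.add i2
    calc ∫ z, (Sm.indicator (fun _ => cm) z + S0.indicator (fun _ => c0) z
            + Sp.indicator (fun _ => cp) z) ∂μ₀
        = (∫ z, (Sm.indicator (fun _ => cm) z + S0.indicator (fun _ => c0) z) ∂μ₀)
          + ∫ z, Sp.indicator (fun _ => cp) z ∂μ₀ := integral_add i12 i3
      _ = ((∫ z, Sm.indicator (fun _ => cm) z ∂μ₀) + ∫ z, S0.indicator (fun _ => c0) z ∂μ₀)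
          + ∫ z, Sp.indicator (fun _ => cp) z ∂μ₀ := by rw [integral_add i1 i2]
      _ = cm * pm + c0 * p0 + cp * pp := by
          rw [integral_indicator_const _ MeasurableSet.of_discrete,
              integral_indicator_const _ MeasurableSet.of_discrete,
              integral_indicator_const _ MeasurableSet.of_discrete]
          simp [smul_eq_mul, hpm, hp0d, hppd, measureReal_def]; ring
  have hpsum : pm + p0 + pp = 1 := by
    have hfun : (fun _ : ℤ => (1:ℝ)) = fun z =>
        Sm.indicator (fun _ => (1:ℝ)) z + S0.indicator (fun _ => (1:ℝ)) z
          + Sp.indicator (fun _ => (1:ℝ)) z := by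
      funext z
      simp only [Set.indicator_apply, hSm, hS0, hSp, Set.mem_setOf_eq]
      split_ifs <;> try norm_num
      all_goals omega
    have h1 : ∫ _z, (1:ℝ) ∂μ₀ = 1 := by simp
    rw [hfun, hintdecomp 1 1 1 (by norm_num) (by norm_num) (by norm_num)] at h1
    linarith
  have hp0 : 1 - ε < p0 := by
    have hne : {R' : ℕ | ENNReal.ofReal (1 - ε)
        < μ₀ {z : ℤ | -(R':ℤ) + 1 ≤ z ∧ z ≤ (R':ℤ) - 1}}.Nonempty := by
      have hmono : Monotone (fun R' : ℕ => {z : ℤ | -(R':ℤ) + 1 ≤ z ∧ z ≤ (R':ℤ) - 1}) := by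
        intro i j hij z hz
        simp only [Set.mem_setOf_eq] at hz ⊢
        have : (i:ℤ) ≤ j := by exact_mod_cast hij
        omega
      have hcup : ⋃ R' : ℕ, {z : ℤ | -(R':ℤ) + 1 ≤ z ∧ z ≤ (R':ℤ) - 1} = Set.univ := by
        ext z; simp only [Set.mem_iUnion, Set.mem_setOf_eq, Set.mem_univ, iff_true]
        exact ⟨z.natAbs + 1, by omega, by omega⟩
      have hlt : ENNReal.ofReal (1 - ε) < μ₀ Set.univ := by
        rw [measure_univ]; exact ENNReal.ofReal_lt_one.mpr (by linarith)
      rw [← hcup, hmono.directed_le.measure_iUnion] at hlt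
      obtain ⟨R', hR'⟩ := lt_iSup_iff.mp hlt
      exact ⟨R', hR'⟩
    have hmem : ENNReal.ofReal (1 - ε)
        < μ₀ {z : ℤ | -((Rmu μ₀ ε : ℕ):ℤ) + 1 ≤ z ∧ z ≤ ((Rmu μ₀ ε : ℕ):ℤ) - 1} := by
      have := Nat.sInf_mem hne
      exact this
    have hRmu : Rmu μ₀ ε ≤ R := le_of_lt (lt_of_le_of_lt (le_max_right _ _) hR)
    have hsub : {z : ℤ | -((Rmu μ₀ ε : ℕ):ℤ) + 1 ≤ z ∧ z ≤ ((Rmu μ₀ ε : ℕ):ℤ) - 1} ⊆ S0 := by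
      intro z hz
      simp only [Set.mem_setOf_eq, hS0] at hz ⊢
      have : ((Rmu μ₀ ε : ℕ):ℤ) ≤ (R:ℤ) := by exact_mod_cast hRmu
      omega
    have hlt2 : ENNReal.ofReal (1 - ε) < μ₀ S0 := lt_of_lt_of_le hmem (measure_mono hsub)
    exact (ENNReal.ofReal_lt_iff_lt_toReal (by linarith) (measure_ne_top μ₀ S0)).mp hlt2
  -- trajectory-side quantities
  set J0 : Finset ℕ := (Finset.Icc 1 n).filter
      (fun j => -(R : ℤ) + 1 ≤ w j ∧ w j ≤ (R : ℤ) - 1) with hJ0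
  set Jm : Finset ℕ := (Finset.Icc 1 n).filter (fun j => w j ≤ -(R:ℤ)) with hJm
  set Jp : Finset ℕ := (Finset.Icc 1 n).filter (fun j => (R:ℤ) ≤ w j) with hJp
  have hdisj1 : Disjoint Jm J0 := by
    rw [Finset.disjoint_left]; intro j hj1 hj2
    rw [hJm, Finset.mem_filter] at hj1; rw [hJ0, Finset.mem_filter] at hj2
    omega
  have hdisj2 : Disjoint (Jm ∪ J0) Jp := by
    rw [Finset.disjoint_left]; intro j hj1 hj2
    rw [Finset.mem_union, hJm, hJ0, Finset.mem_filter, Finset.mem_filter] at hj1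
    rw [hJp, Finset.mem_filter] at hj2
    rcases hj1 with h | h <;> omega
  have hunion : Jm ∪ J0 ∪ Jp = Finset.Icc 1 n := by
    ext j
    simp only [Finset.mem_union, hJm, hJ0, hJp, Finset.mem_filter]
    by_cases hj : j ∈ Finset.Icc 1 n <;> simp [hj] <;> omega
  have hsplit : ∀ g : ℕ → ℝ, ∑ j ∈ Finset.Icc 1 n, g j
      = ∑ j ∈ Jm, g j + ∑ j ∈ J0, g j + ∑ j ∈ Jp, g j := by
    intro g
    rw [← hunion, Finset.sum_union hdisj2, Finset.sum_union hdisj1]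
  have hcard : (Jm.card:ℝ) + (J0.card:ℝ) + (Jp.card:ℝ) = (n:ℝ) := by
    have h := hsplit (fun _ => (1:ℝ))
    simp only [Finset.sum_const, nsmul_eq_mul, mul_one, Nat.card_Icc] at h
    have : n + 1 - 1 = n := by omega
    rw [this] at h
    linarith
  -- the key Kantorovich-Rubinstein estimate for admissible test functions
  have hkrb : BddAbove {r : ℝ | ∃ f : Zbar → ℝ,
      (∀ a b : Zbar, |f a - f b| ≤ |phi a - phi b|) ∧ (∀ a, |f a| ≤ 1) ∧
      r = (1 / (n : ℝ)) * ∑ j ∈ Finset.Icc 1 n, f (Sum.inl (w j))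
            - (am * f (Sum.inr false) + a0 * ∫ z, f (Sum.inl z) ∂μ₀
                + ap * f (Sum.inr true))} := by
    refine ⟨2, ?_⟩
    rintro r ⟨f, hlip, hbd, rfl⟩
    obtain ⟨hfint, hfabs⟩ := zbar_int_bound μ₀ (fun z => f (Sum.inl z)) (fun z => hbd _)
    have h1 : ∑ j ∈ Finset.Icc 1 n, f (Sum.inl (w j)) ≤ (n:ℝ) := by
      calc ∑ j ∈ Finset.Icc 1 n, f (Sum.inl (w j)) ≤ ∑ _j ∈ Finset.Icc 1 n, (1:ℝ) :=
            Finset.sum_le_sum (fun j _ => (abs_le.mp (hbd _)).2)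
      _ = (n:ℝ) := by simp [Nat.card_Icc]
    have h2 : (1/(n:ℝ)) * ∑ j ∈ Finset.Icc 1 n, f (Sum.inl (w j)) ≤ 1 := by
      rw [one_div, inv_mul_le_iff₀ hnR]
      linarith
    have h3 := abs_le.mp (hbd (Sum.inr false))
    have h4 := abs_le.mp (hbd (Sum.inr true))
    have h5 := abs_le.mp hfabs
    have p1 : am * (-1) ≤ am * f (Sum.inr false) := mul_le_mul_of_nonneg_left h3.1 ham
    have p2 : ap * (-1) ≤ ap * f (Sum.inr true) := mul_le_mul_of_nonneg_left h4.1 hap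
    have p3 : a0 * (-1) ≤ a0 * ∫ z, f (Sum.inl z) ∂μ₀ := mul_le_mul_of_nonneg_left h5.1 ha0
    linarith only [h2, p1, p2, p3, hsum]
  have key : ∀ f : Zbar → ℝ, (∀ a b : Zbar, |f a - f b| ≤ |phi a - phi b|) →
      (∀ a, |f a| ≤ 1) →
      (1 / (n : ℝ)) * ∑ j ∈ Finset.Icc 1 n, f (Sum.inl (w j))
        - (am * f (Sum.inr false) + a0 * ∫ z, f (Sum.inl z) ∂μ₀
            + ap * f (Sum.inr true)) < P * ε := by
    intro f hlip hbd
    have hclose' : sSup {r : ℝ | ∃ f : Zbar → ℝ,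
        (∀ a b : Zbar, |f a - f b| ≤ |phi a - phi b|) ∧ (∀ a, |f a| ≤ 1) ∧
        r = (1 / (n : ℝ)) * ∑ j ∈ Finset.Icc 1 n, f (Sum.inl (w j))
              - (am * f (Sum.inr false) + a0 * ∫ z, f (Sum.inl z) ∂μ₀
                  + ap * f (Sum.inr true))} < P * ε := hclose
    exact lt_of_le_of_lt (le_csSup hkrb ⟨f, hlip, hbd, rfl⟩) hclose'
  -- occupation-time errors
  set em := (Jm.card:ℝ)/n - am - a0*pm with hemd
  set e0 := (J0.card:ℝ)/n - a0*p0 with he0d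
  set ep := (Jp.card:ℝ)/n - ap - a0*pp with hepd
  have tests : ∀ cm c0 cp : ℝ, |cm| ≤ 1 → |c0| ≤ 1 → |cp| ≤ 1 → |cm - c0| ≤ 1 →
      |c0 - cp| ≤ 1 → cm * em + c0 * e0 + cp * ep < ε := by
    intro cm c0 cp h1 h2 h3 h4 h5
    have hbdt : ∀ a, |tfun R cm c0 cp a| ≤ 1 := by
      intro a
      have hq : ∀ c : ℝ, |c| ≤ 1 → |P * c| ≤ 1 := by
        intro c hc
        rw [abs_mul, abs_of_pos hP]
        nlinarith only [hc, hP, hP4, abs_nonneg c]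
      rcases tfun_region R hR2 cm c0 cp a with ⟨e, _⟩ | ⟨e, _⟩ | ⟨e, _⟩ <;> rw [e]
      · exact hq cm h1
      · exact hq c0 h2
      · exact hq cp h3
    have hk := key _ (tfun_lip R hR2 cm c0 cp h1 h2 h3 h4 h5) hbdt
    have e1 : ∀ j ∈ Jm, tfun R cm c0 cp (Sum.inl (w j)) = P*cm := by
      intro j hj
      rw [hJm, Finset.mem_filter] at hj
      rw [tfun_inl, if_pos hj.2, hPdef]
    have e2 : ∀ j ∈ J0, tfun R cm c0 cp (Sum.inl (w j)) = P*c0 := by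
      intro j hj
      rw [hJ0, Finset.mem_filter] at hj
      rw [tfun_inl, if_neg (by omega), if_pos (by omega), hPdef]
    have e3 : ∀ j ∈ Jp, tfun R cm c0 cp (Sum.inl (w j)) = P*cp := by
      intro j hj
      rw [hJp, Finset.mem_filter] at hj
      rw [tfun_inl, if_neg (by omega), if_neg (by omega), hPdef]
    have hsum1 : ∑ j ∈ Finset.Icc 1 n, tfun R cm c0 cp (Sum.inl (w j))
        = (Jm.card:ℝ) * (P*cm) + (J0.card:ℝ) * (P*c0) + (Jp.card:ℝ) * (P*cp) := by
      rw [hsplit (fun j => tfun R cm c0 cp (Sum.inl (w j))),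
          Finset.sum_congr rfl e1, Finset.sum_congr rfl e2, Finset.sum_congr rfl e3]
      simp [Finset.sum_const, nsmul_eq_mul]
    have hb1 : |P*cm| ≤ 1 := by
      rw [abs_mul, abs_of_pos hP]; nlinarith only [h1, hP, hP4, abs_nonneg cm]
    have hb2 : |P*c0| ≤ 1 := by
      rw [abs_mul, abs_of_pos hP]; nlinarith only [h2, hP, hP4, abs_nonneg c0]
    have hb3 : |P*cp| ≤ 1 := by
      rw [abs_mul, abs_of_pos hP]; nlinarith only [h3, hP, hP4, abs_nonneg cp]
    have hint1 : ∫ z, tfun R cm c0 cp (Sum.inl z) ∂μ₀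
        = (P*cm) * pm + (P*c0) * p0 + (P*cp) * pp := by
      have hfeq : (fun z : ℤ => tfun R cm c0 cp (Sum.inl z)) = fun z =>
          Sm.indicator (fun _ => P*cm) z + S0.indicator (fun _ => P*c0) z
            + Sp.indicator (fun _ => P*cp) z := by
        funext z
        rw [tfun_inl]
        simp only [Set.indicator_apply, hSm, hS0, hSp, Set.mem_setOf_eq, ← hPdef]
        split_ifs <;> first | (exfalso; omega) | ring
      rw [hfeq, hintdecomp (P*cm) (P*c0) (P*cp) hb1 hb2 hb3]
    have hne : (n:ℝ) ≠ 0 := ne_of_gt hnR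
    have heq : (1 / (n : ℝ)) * ∑ j ∈ Finset.Icc 1 n, tfun R cm c0 cp (Sum.inl (w j))
        - (am * tfun R cm c0 cp (Sum.inr false)
            + a0 * ∫ z, tfun R cm c0 cp (Sum.inl z) ∂μ₀
            + ap * tfun R cm c0 cp (Sum.inr true))
        = P * (cm * em + c0 * e0 + cp * ep) := by
      rw [hsum1, hint1, show tfun R cm c0 cp (Sum.inr false) = P * cm from rfl,
          show tfun R cm c0 cp (Sum.inr true) = P * cp from rfl,
          hemd, he0d, hepd]
      field_simp
      ring
    rw [heq] at hk
    exact lt_of_mul_lt_mul_left hk hP.le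
  have he0abs : |e0| < ε := by
    have hpos := tests 0 1 0 (by norm_num) (by norm_num) (by norm_num) (by norm_num) (by norm_num)
    have hneg := tests 0 (-1) 0 (by norm_num) (by norm_num) (by norm_num) (by norm_num)
      (by norm_num)
    rw [abs_lt]
    constructor
    · linarith only [hneg]
    · linarith only [hpos]
  have hepm : |em| + |ep| < ε := by
    rcases le_or_gt 0 em with hx | hx <;> rcases le_or_gt 0 ep with hy | hy
    · rw [abs_of_nonneg hx, abs_of_nonneg hy]
      have := tests 1 0 1 (by norm_num) (by norm_num) (by norm_num) (by norm_num) (by norm_num)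
      linarith only [this]
    · rw [abs_of_nonneg hx, abs_of_neg hy]
      have := tests 1 0 (-1) (by norm_num) (by norm_num) (by norm_num) (by norm_num) (by norm_num)
      linarith only [this]
    · rw [abs_of_neg hx, abs_of_nonneg hy]
      have := tests (-1) 0 1 (by norm_num) (by norm_num) (by norm_num) (by norm_num) (by norm_num)
      linarith only [this]
    · rw [abs_of_neg hx, abs_of_neg hy]
      have := tests (-1) 0 (-1) (by norm_num) (by norm_num) (by norm_num) (by norm_num)
        (by norm_num)
      linarith only [this]
  have he0' := abs_lt.mp he0abs
  have ha0ε : a0 * ε ≤ ε := by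
    have q := mul_nonneg (by linarith only [ha0le1] : (0:ℝ) ≤ 1 - a0) hε.le
    linarith only [q]
  have ha0p0 : a0 * (1 - ε) < a0 * p0 := by
    exact mul_lt_mul_of_pos_left hp0 ha0pos
  have hN0n : a0 - 2*ε < (J0.card:ℝ)/n := by
    have : a0 * p0 - ε < (J0.card:ℝ)/n := by rw [he0d] at he0'; linarith only [he0'.1]
    linarith only [this, ha0p0, ha0ε]
  have hN0pos : 0 < (J0.card:ℝ) := by
    have h1 : 0 < (J0.card:ℝ)/n := by linarith only [hN0n, hεa0]
    rcases div_pos_iff.mp h1 with ⟨h3, _⟩ | ⟨_, h4⟩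
    · exact h3
    · linarith only [h4, hnR]
  have hNa0 : |a0 - (J0.card:ℝ)/n| < 2*ε := by
    have h2 : a0*(1-p0) < ε := by
      have q := mul_nonneg (by linarith only [ha0le1] : (0:ℝ) ≤ 1 - a0)
        (by linarith only [hp0le] : (0:ℝ) ≤ 1 - p0)
      linarith only [q, hp0]
    have h3 : 0 ≤ a0*(1-p0) := mul_nonneg ha0 (by linarith only [hp0le])
    have h4 : a0 - (J0.card:ℝ)/n = a0*(1-p0) - e0 := by rw [he0d]; ring
    rw [abs_lt, h4]
    constructor
    · linarith only [h3, he0'.2, hε]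
    · linarith only [h2, he0'.1]
  -- main estimate for each admissible f on the restricted problem
  have hlt56 : 5*ε/a0 < 6*ε/a0 := by
    rw [div_lt_div_iff₀ ha0pos ha0pos]
    have := mul_pos hε ha0pos
    linarith only [this]
  refine lt_of_le_of_lt (Real.sSup_le ?_ (by positivity)) hlt56
  rintro r ⟨f, hlip, hbd, rfl⟩
  obtain ⟨hfint, hfabs⟩ := zbar_int_bound μ₀ (fun z => f (Sum.inl z)) (fun z => hbd _)
  have hk := key f hlip hbd
  have hFm := abs_le.mp (hbd (Sum.inr false))
  have hFp := abs_le.mp (hbd (Sum.inr true))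
  have ht := abs_le.mp hfabs
  have hlow : ∀ j ∈ Jm, f (Sum.inr false) - P ≤ f (Sum.inl (w j)) := by
    intro j hj
    rw [hJm, Finset.mem_filter] at hj
    have hwj := hj.2
    have h0 : ¬ (0 ≤ w j) := by omega
    have hphi : |phi (Sum.inl (w j)) - phi (Sum.inr false)| ≤ P := by
      rw [phi_inl, if_neg h0, phi_bot]
      have h1 : (2:ℝ)^(w j) ≤ P := by rw [hPdef]; exact zpow_le_zpow_right₀ one_le_two hwj
      have h2 : (0:ℝ) < (2:ℝ)^(w j) := by positivity
      rw [show (-1 + (2:ℝ)^(w j) - (-1)) = (2:ℝ)^(w j) by ring, abs_of_pos h2]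
      exact h1
    have h3 := abs_le.mp ((hlip (Sum.inl (w j)) (Sum.inr false)).trans hphi)
    linarith only [h3.1]
  have hhigh : ∀ j ∈ Jp, f (Sum.inr true) - P ≤ f (Sum.inl (w j)) := by
    intro j hj
    rw [hJp, Finset.mem_filter] at hj
    have hwj := hj.2
    have h0 : (0:ℤ) ≤ w j := by omega
    have hphi : |phi (Sum.inl (w j)) - phi (Sum.inr true)| ≤ P := by
      rw [phi_inl, if_pos h0, phi_top]
      have h1 : (2:ℝ)^(-(w j)) ≤ P := by
        rw [hPdef]; exact zpow_le_zpow_right₀ one_le_two (by omega)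
      have h2 : (0:ℝ) < (2:ℝ)^(-(w j)) := by positivity
      rw [show (1 - (2:ℝ)^(-(w j)) - 1) = -((2:ℝ)^(-(w j))) by ring, abs_neg, abs_of_pos h2]
      exact h1
    have h3 := abs_le.mp ((hlip (Sum.inl (w j)) (Sum.inr true)).trans hphi)
    linarith only [h3.1]
  have hsm : (Jm.card:ℝ) * (f (Sum.inr false) - P) ≤ ∑ j ∈ Jm, f (Sum.inl (w j)) := by
    have := Finset.card_nsmul_le_sum Jm (fun j => f (Sum.inl (w j))) _ hlow
    simpa [nsmul_eq_mul] using this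
  have hsp : (Jp.card:ℝ) * (f (Sum.inr true) - P) ≤ ∑ j ∈ Jp, f (Sum.inl (w j)) := by
    have := Finset.card_nsmul_le_sum Jp (fun j => f (Sum.inl (w j))) _ hhigh
    simpa [nsmul_eq_mul] using this
  have hSabs : |∑ j ∈ J0, f (Sum.inl (w j))| ≤ (J0.card:ℝ) := by
    calc |∑ j ∈ J0, f (Sum.inl (w j))| ≤ ∑ j ∈ J0, |f (Sum.inl (w j))| :=
          Finset.abs_sum_le_sum_abs _ _
    _ ≤ ∑ _j ∈ J0, (1:ℝ) := Finset.sum_le_sum (fun j _ => hbd _)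
    _ = (J0.card:ℝ) := by simp
  have hAf : (∑ j ∈ J0, f (Sum.inl (w j)))/(n:ℝ)
      - a0 * ∫ z, f (Sum.inl z) ∂μ₀ < 2*ε + P*ε + P := by
    have hsf := hsplit (fun j => f (Sum.inl (w j)))
    have e1 : ∑ j ∈ J0, f (Sum.inl (w j))
        ≤ (∑ j ∈ Finset.Icc 1 n, f (Sum.inl (w j)))
          - (Jm.card:ℝ)*(f (Sum.inr false) - P) - (Jp.card:ℝ)*(f (Sum.inr true) - P) := by
      linarith only [hsf, hsm, hsp]
    have e2 : (∑ j ∈ J0, f (Sum.inl (w j)))/(n:ℝ)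
        ≤ (1/(n:ℝ)) * (∑ j ∈ Finset.Icc 1 n, f (Sum.inl (w j)))
          - ((Jm.card:ℝ)/n)*(f (Sum.inr false) - P)
          - ((Jp.card:ℝ)/n)*(f (Sum.inr true) - P) := by
      have h := mul_le_mul_of_nonneg_left e1 (le_of_lt (one_div_pos.mpr hnR))
      calc (∑ j ∈ J0, f (Sum.inl (w j)))/(n:ℝ)
          = (1/(n:ℝ)) * ∑ j ∈ J0, f (Sum.inl (w j)) := by ring
      _ ≤ _ := h
      _ = _ := by ring
    have e3 : (∑ j ∈ J0, f (Sum.inl (w j)))/(n:ℝ)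
        < am * f (Sum.inr false) + a0 * (∫ z, f (Sum.inl z) ∂μ₀)
          + ap * f (Sum.inr true) + P*ε
          - ((Jm.card:ℝ)/n)*(f (Sum.inr false) - P)
          - ((Jp.card:ℝ)/n)*(f (Sum.inr true) - P) := by linarith only [e2, hk]
    have q1 : |em * f (Sum.inr false)| ≤ |em| := by
      rw [abs_mul]; exact mul_le_of_le_one_right (abs_nonneg _) (hbd _)
    have q2 : 0 ≤ (a0*pm)*(1 + f (Sum.inr false)) :=
      mul_nonneg (mul_nonneg ha0 hpm0) (by linarith [hFm.1])
    have hb1 : (am - (Jm.card:ℝ)/n) * f (Sum.inr false) ≤ |em| + a0*pm := by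
      have hrw : am - (Jm.card:ℝ)/n = -em - a0*pm := by rw [hemd]; ring
      rw [hrw]
      have := neg_abs_le (em * f (Sum.inr false))
      linarith only [q1, q2, this]
    have q3 : |ep * f (Sum.inr true)| ≤ |ep| := by
      rw [abs_mul]; exact mul_le_of_le_one_right (abs_nonneg _) (hbd _)
    have q4 : 0 ≤ (a0*pp)*(1 + f (Sum.inr true)) :=
      mul_nonneg (mul_nonneg ha0 hpp0) (by linarith [hFp.1])
    have hb2 : (ap - (Jp.card:ℝ)/n) * f (Sum.inr true) ≤ |ep| + a0*pp := by
      have hrw : ap - (Jp.card:ℝ)/n = -ep - a0*pp := by rw [hepd]; ring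
      rw [hrw]
      have := neg_abs_le (ep * f (Sum.inr true))
      linarith only [q3, q4, this]
    have hfrac : (Jm.card:ℝ)/n + (Jp.card:ℝ)/n ≤ 1 := by
      rw [← add_div, div_le_one hnR]
      have : (0:ℝ) ≤ (J0.card:ℝ) := Nat.cast_nonneg _
      linarith only [this, hcard]
    have hfrac2 : P*((Jm.card:ℝ)/n) + P*((Jp.card:ℝ)/n) ≤ P := by
      have := mul_le_mul_of_nonneg_left hfrac hP.le
      linarith only [this]
    have htail : a0*pm + a0*pp < ε := by
      have q := mul_nonneg (by linarith only [ha0le1] : (0:ℝ) ≤ 1 - a0)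
        (by linarith only [hpm0, hpp0] : (0:ℝ) ≤ pm + pp)
      linarith only [q, hpsum, hp0]
    linarith only [e3, hb1, hb2, hfrac2, htail, hepm]
  -- combine
  have hNne : (J0.card:ℝ) ≠ 0 := ne_of_gt hN0pos
  have hne : (n:ℝ) ≠ 0 := ne_of_gt hnR
  have heq : (1/(J0.card:ℝ)) * (∑ j ∈ J0, f (Sum.inl (w j))) - ∫ z, f (Sum.inl z) ∂μ₀
      = ((a0 - (J0.card:ℝ)/n) * ((∑ j ∈ J0, f (Sum.inl (w j)))/(J0.card:ℝ))
          + ((∑ j ∈ J0, f (Sum.inl (w j)))/(n:ℝ) - a0 * ∫ z, f (Sum.inl z) ∂μ₀)) / a0 := by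
    field_simp
    ring
  have hq : |(∑ j ∈ J0, f (Sum.inl (w j)))/(J0.card:ℝ)| ≤ 1 := by
    rw [abs_div, abs_of_pos hN0pos, div_le_one hN0pos]
    exact hSabs
  have h2 : (a0 - (J0.card:ℝ)/n) * ((∑ j ∈ J0, f (Sum.inl (w j)))/(J0.card:ℝ)) ≤ 2*ε := by
    have h3 : |(a0 - (J0.card:ℝ)/n) * ((∑ j ∈ J0, f (Sum.inl (w j)))/(J0.card:ℝ))| ≤ 2*ε := by
      rw [abs_mul]
      have := mul_le_mul hNa0.le hq
        (abs_nonneg ((∑ j ∈ J0, f (Sum.inl (w j)))/(J0.card:ℝ)))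
        (by linarith only [hε] : (0:ℝ) ≤ 2*ε)
      linarith only [this]
    linarith only [h3,
      le_abs_self ((a0 - (J0.card:ℝ)/n) * ((∑ j ∈ J0, f (Sum.inl (w j)))/(J0.card:ℝ)))]
  have hPε : P*ε ≤ ε/8 := by
    have q1 := mul_le_mul_of_nonneg_right hPe hε.le
    have q2 := mul_le_mul_of_nonneg_left hεh.le (by positivity : (0:ℝ) ≤ ε/4)
    linarith only [q1, q2]
  have hnum : (a0 - (J0.card:ℝ)/n) * ((∑ j ∈ J0, f (Sum.inl (w j)))/(J0.card:ℝ))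
      + ((∑ j ∈ J0, f (Sum.inl (w j)))/(n:ℝ) - a0 * ∫ z, f (Sum.inl z) ∂μ₀) ≤ 5*ε := by
    linarith only [h2, hAf, hPe, hPε, hε]
  rw [heq, div_le_div_iff₀ ha0pos ha0pos]
  exact mul_le_mul_of_nonneg_right hnum (le_of_lt ha0pos)
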